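/- The probability of strict-dominance solvability of G(2,n) is strictly decreasing in n: for every n ≥ 1, π(2,n+1) < π(2,n). -/

import Mathlib

open Finset Filter

noncomputable section

/-- Row action `i` is strictly dominated in the restricted game with Row actions `X`
and Column actions `Y`, for Row payoff matrix `R`. -/
def RowDomIn {m n : ℕ} (R : Fin m → Fin n → ℝ) (X : Finset (Fin m)) (Y : Finset (Fin n))
    (i : Fin m) : Prop :=
  ∃ i' ∈ X, ∀ j ∈ Y, R i j < R i' j

/-- Column action `j` is strictly dominated in the restricted game with Row actions `X`
and Column actions `Y`, for Column payoff matrix `C`. -/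
def ColDomIn {m n : ℕ} (C : Fin m → Fin n → ℝ) (X : Finset (Fin m)) (Y : Finset (Fin n))
    (j : Fin n) : Prop :=
  ∃ j' ∈ Y, ∀ i ∈ X, C i j < C i j'

open Classical in
/-- One round of iterated elimination: simultaneously delete every strictly dominated
action of both players in the current restricted game. -/
def elimStep {m n : ℕ} (R C : Fin m → Fin n → ℝ)
    (p : Finset (Fin m) × Finset (Fin n)) : Finset (Fin m) × Finset (Fin n) :=
  (p.1.filter fun i => ¬ RowDomIn R p.1 p.2 i,
   p.2.filter fun j => ¬ ColDomIn C p.1 p.2 j)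

/-- Surviving actions of the subgame `(p.1, p.2)` after iterated elimination of strictly
dominated actions (iterating `m + n` times surely reaches the fixed point). -/
def survivorsFrom {m n : ℕ} (R C : Fin m → Fin n → ℝ)
    (p : Finset (Fin m) × Finset (Fin n)) : Finset (Fin m) × Finset (Fin n) :=
  (elimStep R C)^[m + n] p

/-- The subgame `(p.1, p.2)` is strict-dominance solvable: exactly one action of each
player survives iterated elimination of strictly dominated actions. -/
def SolvableFrom {m n : ℕ} (R C : Fin m → Fin n → ℝ)
    (p : Finset (Fin m) × Finset (Fin n)) : Prop :=
  (survivorsFrom R C p).1.card = 1 ∧ (survivorsFrom R C p).2.card = 1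

/-- Surviving actions of the full game after iterated elimination. -/
def survivors {m n : ℕ} (R C : Fin m → Fin n → ℝ) : Finset (Fin m) × Finset (Fin n) :=
  survivorsFrom R C (Finset.univ, Finset.univ)

/-- The game is strict-dominance solvable. -/
def Solvable {m n : ℕ} (R C : Fin m → Fin n → ℝ) : Prop :=
  SolvableFrom R C (Finset.univ, Finset.univ)

/-- The number of rounds performed by the iterated elimination procedure:
the least `k` such that round `k + 1` deletes nothing more. -/
def elimRounds {m n : ℕ} (R C : Fin m → Fin n → ℝ) : ℕ :=
  sInf {k | (elimStep R C)^[k + 1] (Finset.univ, Finset.univ)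
          = (elimStep R C)^[k] (Finset.univ, Finset.univ)}

/-- Sample space of the random game `G(m,n)`: for each Column action an i.i.d. uniform
permutation giving Row's ordinal payoffs in that column, and for each Row action an
i.i.d. uniform permutation giving Column's ordinal payoffs in that row. -/
abbrev Omega (m n : ℕ) := (Fin n → Equiv.Perm (Fin m)) × (Fin m → Equiv.Perm (Fin n))

/-- Row's payoff matrix of the realized game. -/
def RPay {m n : ℕ} (ω : Omega m n) : Fin m → Fin n → ℝ := fun i j => ((ω.1 j) i : ℕ)

/-- Column's payoff matrix of the realized game. -/
def CPay {m n : ℕ} (ω : Omega m n) : Fin m → Fin n → ℝ := fun i j => ((ω.2 i) j : ℕ)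

/-- Probability of an event under the uniform distribution on `Omega m n`
(i.e. all `m + n` permutations uniform and mutually independent). -/
def Pr {m n : ℕ} (E : Set (Omega m n)) : ℝ :=
  (E.toFinite.toFinset.card : ℝ) / (Fintype.card (Omega m n) : ℝ)

open Classical in
/-- Number of Row actions that are not strictly dominated. -/
def UR {m n : ℕ} (ω : Omega m n) : ℕ :=
  (Finset.univ.filter fun i => ¬ RowDomIn (RPay ω) Finset.univ Finset.univ i).card

open Classical in
/-- Number of Column actions that are not strictly dominated. -/
def UC {m n : ℕ} (ω : Omega m n) : ℕ :=
  (Finset.univ.filter fun j => ¬ ColDomIn (CPay ω) Finset.univ Finset.univ j).card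

/-- Number of Row actions surviving iterated elimination. -/
def SR {m n : ℕ} (ω : Omega m n) : ℕ := (survivors (RPay ω) (CPay ω)).1.card

/-- Number of Column actions surviving iterated elimination. -/
def SC {m n : ℕ} (ω : Omega m n) : ℕ := (survivors (RPay ω) (CPay ω)).2.card

/-- The realized game is strict-dominance solvable. -/
def GameSolvable {m n : ℕ} (ω : Omega m n) : Prop := Solvable (RPay ω) (CPay ω)

/-- Number of rounds of the iterated elimination procedure in the realized game. -/
def GameRounds {m n : ℕ} (ω : Omega m n) : ℕ := elimRounds (RPay ω) (CPay ω)

/-- `π(m,n)`: probability that the random game `G(m,n)` is strict-dominance solvable. -/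
def probSolvable (m n : ℕ) : ℝ := Pr {ω : Omega m n | GameSolvable ω}

/-- Expected number of Column's strictly undominated actions, `E[U^C(m,n)]`. -/
def expUC (m n : ℕ) : ℝ :=
  (∑ ω : Omega m n, (UC ω : ℝ)) / (Fintype.card (Omega m n) : ℝ)

/-- Expected number of Column actions surviving iterated elimination, `E[S^C(m,n)]`. -/
def expSC (m n : ℕ) : ℝ :=
  (∑ ω : Omega m n, (SC ω : ℝ)) / (Fintype.card (Omega m n) : ℝ)

open Classical in
/-- `E[I(m,n)]`: expected number of elimination rounds conditional on the game being
strict-dominance solvable. -/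
def condExpRounds (m n : ℕ) : ℝ :=
  (∑ ω : Omega m n, if GameSolvable ω then (GameRounds ω : ℝ) else 0) /
    (∑ ω : Omega m n, if GameSolvable ω then (1 : ℝ) else 0)

/-- Unsigned Stirling numbers of the first kind. -/
def stirling1 : ℕ → ℕ → ℕ
  | 0, 0 => 1
  | 0, _ + 1 => 0
  | _ + 1, 0 => 0
  | n + 1, k + 1 => n * stirling1 n (k + 1) + stirling1 n k

end


/-- right-to-left records of a permutation -/
def recSet {n : ℕ} (π : Equiv.Perm (Fin n)) : Finset (Fin n) :=
  Finset.univ.filter fun v => ∀ w, v < w → π w < π v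

def recCount {n : ℕ} (π : Equiv.Perm (Fin n)) : ℕ := (recSet π).card

def Arec (n : ℕ) : ℕ := ∑ π : Equiv.Perm (Fin n), 2 ^ (n - recCount π)

lemma recCount_le {n : ℕ} (π : Equiv.Perm (Fin n)) : recCount π ≤ n := by
  classical
  have := Finset.card_filter_le (Finset.univ : Finset (Fin n))
      (fun v => ∀ w, v < w → π w < π v)
  simpa [recCount, recSet] using this

/-- insertion map: value 0 goes to position q (viewed as inverse-permutations) -/
def insMap {n : ℕ} (p : Fin (n+1) × Equiv.Perm (Fin n)) : Equiv.Perm (Fin (n+1)) :=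
  (finSuccEquiv' 0).trans ((p.2.optionCongr).trans (finSuccEquiv' p.1).symm)

lemma insMap_zero {n : ℕ} (q : Fin (n+1)) (π : Equiv.Perm (Fin n)) :
    insMap (q, π) 0 = q := by
  simp [insMap, finSuccEquiv'_at]

lemma insMap_succ {n : ℕ} (q : Fin (n+1)) (π : Equiv.Perm (Fin n)) (v : Fin n) :
    insMap (q, π) v.succ = q.succAbove (π v) := by
  have h0 : (finSuccEquiv' (0 : Fin (n+1))) v.succ = some v := by
    have := finSuccEquiv'_succAbove (0 : Fin (n+1)) v
    simpa [Fin.succAbove] using this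
  have h1 : (finSuccEquiv' q).symm (some (π v)) = q.succAbove (π v) := by
    rw [Equiv.symm_apply_eq, finSuccEquiv'_succAbove]
  simp [insMap, h0, h1]

lemma insMap_bijective {n : ℕ} : Function.Bijective (insMap (n := n)) := by
  rw [Fintype.bijective_iff_injective_and_card]
  constructor
  · rintro ⟨q, π⟩ ⟨q', π'⟩ h
    have hq : q = q' := by
      have := congrArg (fun ρ : Equiv.Perm (Fin (n+1)) => ρ 0) h
      simpa [insMap_zero] using this
    subst hq
    have hπ : π = π' := Equiv.ext fun v => Fin.succAbove_right_injective (by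
      have := congrArg (fun ρ : Equiv.Perm (Fin (n+1)) => ρ v.succ) h
      simpa only [insMap_succ] using this)
    simp [hπ]
  · simp [Fintype.card_perm, Fintype.card_prod, Nat.factorial_succ]

lemma recCount_insMap {n : ℕ} (q : Fin (n+1)) (π : Equiv.Perm (Fin n)) :
    recCount (insMap (q, π)) = (if q = Fin.last n then 1 else 0) + recCount π := by
  classical
  set ρ := insMap (q, π) with hρ
  have mem_zero : (0 : Fin (n+1)) ∈ recSet ρ ↔ q = Fin.last n := by
    constructor
    · intro h0
      by_contra hq
      have hqlt : (q : ℕ) < n := Fin.val_lt_last hq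
      set u : Fin n := ⟨(q : ℕ), hqlt⟩ with hu
      have hcs : u.castSucc = q := by
        ext; simp [hu]
      have h0' : ∀ w, (0 : Fin (n+1)) < w → ρ w < ρ 0 := by
        simpa [recSet] using h0
      have := h0' (π.symm u).succ (Fin.succ_pos _)
      rw [hρ, insMap_succ, insMap_zero, Equiv.apply_symm_apply] at this
      have hsa : q.succAbove u = u.succ := by
        apply Fin.succAbove_of_le_castSucc
        exact le_of_eq hcs.symm
      rw [hsa] at this
      have : (u.succ : ℕ) < (q : ℕ) := this
      simp [hu] at this
    · intro hq
      simp only [recSet, Finset.mem_filter, Finset.mem_univ, true_and]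
      intro w hw
      obtain ⟨v, rfl⟩ := Fin.eq_succ_of_ne_zero (Fin.pos_iff_ne_zero.mp hw)
      rw [hρ, insMap_succ, insMap_zero, hq, Fin.succAbove_last]
      exact Fin.castSucc_lt_last _
  have mem_succ : ∀ v : Fin n, (v.succ ∈ recSet ρ ↔ v ∈ recSet π) := by
    intro v
    simp only [recSet, Finset.mem_filter, Finset.mem_univ, true_and]
    constructor
    · intro h t ht
      have := h t.succ (Fin.succ_lt_succ_iff.mpr ht)
      rw [hρ, insMap_succ, insMap_succ] at this
      exact (Fin.succAbove_lt_succAbove_iff).mp this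
    · intro h w hw
      obtain ⟨t, rfl⟩ := Fin.eq_succ_of_ne_zero (Fin.pos_iff_ne_zero.mp
        (lt_trans (Fin.succ_pos v) hw))
      rw [hρ, insMap_succ, insMap_succ]
      exact (Fin.succAbove_lt_succAbove_iff).mpr (h t (Fin.succ_lt_succ_iff.mp hw))
  have hcard : recCount ρ = (∑ x : Fin (n+1), if x ∈ recSet ρ then 1 else 0) := by
    rw [recCount, Finset.card_eq_sum_ones, ← Finset.univ_inter (recSet ρ),
      ← Finset.sum_ite_mem]
    simp [Finset.mem_inter]
  rw [hcard, Fin.sum_univ_succ]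
  congr 1
  · simp [mem_zero]
  · simp only [mem_succ]
    rw [Finset.sum_ite_mem, Finset.univ_inter, recCount, Finset.card_eq_sum_ones]

lemma Arec_succ (n : ℕ) : Arec (n+1) = (2*n+1) * Arec n := by
  classical
  have hb := insMap_bijective (n := n)
  rw [Arec, ← Fintype.sum_bijective insMap hb _ _ (fun p => rfl)]
  rw [Fintype.sum_prod_type]
  have key : ∀ q (π : Equiv.Perm (Fin n)),
      2 ^ (n + 1 - recCount (insMap (q, π)))
        = if q = Fin.last n then 2 ^ (n - recCount π) else 2 * 2 ^ (n - recCount π) := by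
    intro q π
    rw [recCount_insMap]
    have h := recCount_le π
    split_ifs with hq
    · congr 1
      omega
    · rw [← pow_succ']
      congr 1
      omega
  calc (∑ q : Fin (n+1), ∑ π : Equiv.Perm (Fin n), 2 ^ (n + 1 - recCount (insMap (q, π))))
      = ∑ q : Fin (n+1), ∑ π : Equiv.Perm (Fin n),
          (if q = Fin.last n then 2 ^ (n - recCount π) else 2 * 2 ^ (n - recCount π)) := by
        refine Finset.sum_congr rfl fun q _ => Finset.sum_congr rfl fun π _ => key q π
    _ = (∑ q : Fin n, ∑ π : Equiv.Perm (Fin n), 2 * 2 ^ (n - recCount π))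
          + ∑ π : Equiv.Perm (Fin n), 2 ^ (n - recCount π) := by
        rw [Fin.sum_univ_castSucc]
        congr 1
        · refine Finset.sum_congr rfl fun q _ => Finset.sum_congr rfl fun π _ => ?_
          rw [if_neg (Fin.castSucc_lt_last q).ne]
        · exact Finset.sum_congr rfl fun π _ => if_pos rfl
    _ = (2*n+1) * Arec n := by
        simp only [Finset.sum_const, Finset.card_univ, Fintype.card_fin, ← Finset.mul_sum]
        rw [Arec]
        ring

section Stage2

open Equiv

variable {n : ℕ}

/-- Frontier (Pareto-maximal columns) of the column player's payoffs. -/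
def FrB (b : Fin 2 → Equiv.Perm (Fin n)) : Finset (Fin n) :=
  Finset.univ.filter fun j => ∀ j', ¬(b 0 j < b 0 j' ∧ b 1 j < b 1 j')

lemma perm2_lt_iff : ∀ (g : Equiv.Perm (Fin 2)) (i : Fin 2), (g i < g (i+1) ↔ g 0 = i) := by
  decide

lemma perm2_lt_ne : ∀ (g : Equiv.Perm (Fin 2)) (i i' : Fin 2), g i < g i' → i' = i + 1 := by
  decide

lemma fin2_add_one_ne (i : Fin 2) : i + 1 ≠ i := by revert i; decide

lemma rpay_lt_iff (ω : Omega 2 n) (i i' : Fin 2) (j : Fin n) :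
    RPay ω i j < RPay ω i' j ↔ ω.1 j i < ω.1 j i' := by
  show ((ω.1 j i : ℕ) : ℝ) < ((ω.1 j i' : ℕ) : ℝ) ↔ _
  rw [Nat.cast_lt]
  exact Fin.lt_def.symm

lemma cpay_lt_iff (ω : Omega 2 n) (i : Fin 2) (j j' : Fin n) :
    CPay ω i j < CPay ω i j' ↔ ω.2 i j < ω.2 i j' := by
  show ((ω.2 i j : ℕ) : ℝ) < ((ω.2 i j' : ℕ) : ℝ) ↔ _
  rw [Nat.cast_lt]
  exact Fin.lt_def.symm

lemma rowDom_iff (ω : Omega 2 n) (X : Finset (Fin 2)) (Y : Finset (Fin n))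
    (hY : Y.Nonempty) (i : Fin 2) :
    RowDomIn (RPay ω) X Y i ↔ ((i+1) ∈ X ∧ ∀ j ∈ Y, ω.1 j 0 = i) := by
  constructor
  · rintro ⟨i', hi', h⟩
    obtain ⟨j₀, hj₀⟩ := hY
    have hlt : ω.1 j₀ i < ω.1 j₀ i' := (rpay_lt_iff ω i i' j₀).mp (h j₀ hj₀)
    have hii' : i' = i + 1 := perm2_lt_ne _ _ _ hlt
    subst hii'
    refine ⟨hi', fun j hj => ?_⟩
    exact (perm2_lt_iff (ω.1 j) i).mp ((rpay_lt_iff ω i (i+1) j).mp (h j hj))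
  · rintro ⟨hmem, h⟩
    exact ⟨i+1, hmem, fun j hj => (rpay_lt_iff ω i (i+1) j).mpr
      ((perm2_lt_iff (ω.1 j) i).mpr (h j hj))⟩

lemma colDom_univ_iff (ω : Omega 2 n) (Y : Finset (Fin n)) (j : Fin n) :
    ColDomIn (CPay ω) Finset.univ Y j
      ↔ ∃ j' ∈ Y, ω.2 0 j < ω.2 0 j' ∧ ω.2 1 j < ω.2 1 j' := by
  unfold ColDomIn
  refine exists_congr fun j' => and_congr_right fun _ => ?_
  rw [show (∀ i ∈ (Finset.univ : Finset (Fin 2)), CPay ω i j < CPay ω i j')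
      ↔ (CPay ω 0 j < CPay ω 0 j' ∧ CPay ω 1 j < CPay ω 1 j') by
    constructor
    · intro h; exact ⟨h 0 (Finset.mem_univ _), h 1 (Finset.mem_univ _)⟩
    · rintro ⟨h0, h1⟩ i _; fin_cases i <;> assumption]
  rw [cpay_lt_iff, cpay_lt_iff]

lemma colDom_singleton_iff (ω : Omega 2 n) (c : Fin 2) (Y : Finset (Fin n)) (j : Fin n) :
    ColDomIn (CPay ω) {c} Y j ↔ ∃ j' ∈ Y, ω.2 c j < ω.2 c j' := by
  unfold ColDomIn
  refine exists_congr fun j' => and_congr_right fun _ => ?_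
  constructor
  · intro h; exact (cpay_lt_iff ω c j j').mp (h c (Finset.mem_singleton_self c))
  · intro h i hi
    rw [Finset.mem_singleton] at hi; rw [hi]
    exact (cpay_lt_iff ω c j j').mpr h

lemma FrB_nonempty (hn : 1 ≤ n) (b : Fin 2 → Equiv.Perm (Fin n)) : (FrB b).Nonempty := by
  have huniv : (Finset.univ : Finset (Fin n)).Nonempty := by
    have : Nonempty (Fin n) := ⟨⟨0, hn⟩⟩
    exact Finset.univ_nonempty
  obtain ⟨j₀, _, hmax⟩ := Finset.exists_max_image Finset.univ (b 0) huniv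
  refine ⟨j₀, ?_⟩
  simp only [FrB, Finset.mem_filter, Finset.mem_univ, true_and]
  intro j' hc
  exact absurd hc.1 (not_lt.mpr (hmax j' (Finset.mem_univ _)))

lemma argmax_filter_card (b : Fin 2 → Equiv.Perm (Fin n)) (c : Fin 2)
    (Y : Finset (Fin n)) (hY : Y.Nonempty) :
    (Y.filter fun j => ¬ ∃ j' ∈ Y, b c j < b c j').card = 1 := by
  classical
  obtain ⟨j₀, hj₀, hmax⟩ := Finset.exists_max_image Y (b c) hY
  rw [show (Y.filter fun j => ¬ ∃ j' ∈ Y, b c j < b c j') = {j₀} from ?_]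
  · exact Finset.card_singleton _
  ext j
  simp only [Finset.mem_filter, Finset.mem_singleton, not_exists]
  constructor
  · rintro ⟨hj, h⟩
    have h1 : ¬ b c j < b c j₀ := fun hlt => h j₀ ⟨hj₀, hlt⟩
    have h2 : b c j ≤ b c j₀ := hmax j hj
    exact (b c).injective (le_antisymm h2 (le_of_not_gt h1))
  · rintro rfl
    exact ⟨hj₀, fun j' hcon => (not_lt.mpr (hmax j' hcon.1)) hcon.2⟩

/-- a state with two singletons is a fixed point of elimStep -/
lemma elimStep_fixed {m k : ℕ} (R C : Fin m → Fin k → ℝ) (i : Fin m) (j : Fin k) :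
    elimStep R C ({i}, {j}) = ({i}, {j}) := by
  classical
  unfold elimStep
  refine Prod.ext ?_ ?_ <;> simp only
  · rw [Finset.filter_eq_self]
    intro x hx
    rw [Finset.mem_singleton] at hx; subst hx
    rintro ⟨i', hi', h⟩
    rw [Finset.mem_singleton] at hi'; subst hi'
    exact lt_irrefl _ (h j (Finset.mem_singleton_self _))
  · rw [Finset.filter_eq_self]
    intro y hy
    rw [Finset.mem_singleton] at hy; subst hy
    rintro ⟨j', hj', h⟩
    rw [Finset.mem_singleton] at hj'; subst hj'
    exact lt_irrefl _ (h i (Finset.mem_singleton_self _))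

/-- elimStep from a single-row state with nonempty columns -/
lemma step_single (ω : Omega 2 n) (c : Fin 2) (Y : Finset (Fin n)) (hY : Y.Nonempty) :
    elimStep (RPay ω) (CPay ω) ({c}, Y)
      = ({c}, Y.filter fun j => ¬ ∃ j' ∈ Y, ω.2 c j < ω.2 c j') := by
  classical
  unfold elimStep
  refine Prod.ext ?_ ?_ <;> simp only
  · rw [Finset.filter_eq_self]
    intro x hx
    rw [Finset.mem_singleton] at hx
    rw [rowDom_iff ω _ _ hY]
    rintro ⟨hmem, -⟩
    rw [Finset.mem_singleton, hx] at hmem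
    exact fin2_add_one_ne c hmem
  · refine Finset.filter_congr fun j _ => ?_
    rw [colDom_singleton_iff]

open Classical in
/-- elimStep from the (univ, univ) state: columns reduce to the frontier. -/
lemma step_full_cols (ω : Omega 2 n) :
    (Finset.univ.filter fun j => ¬ ColDomIn (CPay ω) Finset.univ Finset.univ j)
      = FrB ω.2 := by
  classical
  refine Finset.filter_congr fun j _ => ?_
  rw [colDom_univ_iff]
  simp [FrB]

end Stage2

section Stage3

open Equiv

variable {n : ℕ}

lemma fin2_ne_iff : ∀ i x : Fin 2, (¬ i = x) ↔ i = x + 1 := by decide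

lemma univ_fin_nonempty (hn : 1 ≤ n) : (Finset.univ : Finset (Fin n)).Nonempty :=
  ⟨⟨0, hn⟩, Finset.mem_univ _⟩

lemma mem_FrB_iff (b : Fin 2 → Equiv.Perm (Fin n)) (j : Fin n) :
    j ∈ FrB b ↔ ∀ j', ¬(b 0 j < b 0 j' ∧ b 1 j < b 1 j') := by
  simp [FrB]

open Classical in
lemma step_univ_FrB (hn : 1 ≤ n) (ω : Omega 2 n) :
    elimStep (RPay ω) (CPay ω) (Finset.univ, FrB ω.2)
      = (Finset.univ.filter fun i => ¬ ∀ j ∈ FrB ω.2, ω.1 j 0 = i, FrB ω.2) := by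
  have hF := FrB_nonempty hn ω.2
  unfold elimStep
  refine Prod.ext ?_ ?_ <;> simp only
  · refine Finset.filter_congr fun i _ => ?_
    rw [rowDom_iff ω _ _ hF]
    simp
  · rw [Finset.filter_eq_self]
    intro j hj
    rw [colDom_univ_iff]
    rintro ⟨j', -, hlt⟩
    exact (mem_FrB_iff ω.2 j).mp hj j' hlt

open Classical in
lemma step_full (hn : 1 ≤ n) (ω : Omega 2 n) :
    elimStep (RPay ω) (CPay ω) (Finset.univ, Finset.univ)
      = (Finset.univ.filter fun i => ¬ ∀ j, ω.1 j 0 = i, FrB ω.2) := by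
  unfold elimStep
  refine Prod.ext ?_ ?_ <;> simp only
  · refine Finset.filter_congr fun i _ => ?_
    rw [rowDom_iff ω _ _ (univ_fin_nonempty hn)]
    simp
  · exact step_full_cols ω

/-- The key characterization: for `n ≥ 1`, the 2×n game is strict-dominance solvable
iff Row's payoff pattern is constant on the frontier of Column's payoffs. -/
lemma gameSolvable_of (ω : Omega 2 n) (i : Fin 2) (j : Fin n)
    (h : survivors (RPay ω) (CPay ω) = ({i}, {j})) : GameSolvable ω := by
  constructor
  · show (survivors (RPay ω) (CPay ω)).1.card = 1
    rw [h]; simp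
  · show (survivors (RPay ω) (CPay ω)).2.card = 1
    rw [h]; simp

lemma solvable_iff (hn : 1 ≤ n) (ω : Omega 2 n) :
    GameSolvable ω ↔ ∃ x : Fin 2, ∀ j ∈ FrB ω.2, ω.1 j 0 = x := by
  classical
  have hF : (FrB ω.2).Nonempty := FrB_nonempty hn ω.2
  obtain ⟨j₀, hj₀⟩ := hF
  set f := elimStep (RPay ω) (CPay ω) with hf
  have hsurv : survivors (RPay ω) (CPay ω) = f^[2 + n] (Finset.univ, Finset.univ) := rfl
  constructor
  · -- solvable → constant on frontier
    intro hs
    by_contra hnc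
    push_neg at hnc
    set x := ω.1 j₀ 0 with hx
    obtain ⟨j₁, hj₁F, hj₁⟩ := hnc x
    have hrowsall : ∀ (Y : Finset (Fin n)), j₀ ∈ Y → j₁ ∈ Y →
        (Finset.univ.filter fun i => ¬ ∀ j ∈ Y, ω.1 j 0 = i)
          = (Finset.univ : Finset (Fin 2)) := by
      intro Y h0 h1
      rw [Finset.filter_eq_self]
      intro i _ hall
      by_cases hix : i = x
      · exact hj₁ (by rw [hall j₁ h1, hix])
      · exact hix ((hall j₀ h0).symm.trans hx.symm)
    have h1 : f (Finset.univ, Finset.univ) = (Finset.univ, FrB ω.2) := by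
      rw [hf, step_full hn ω]
      refine Prod.ext ?_ rfl
      simp only
      rw [Finset.filter_eq_self]
      intro i _ hall
      by_cases hix : i = x
      · exact hj₁ (by rw [hall j₁, hix])
      · exact hix ((hall j₀).symm.trans hx.symm)
    have h2 : f (Finset.univ, FrB ω.2) = (Finset.univ, FrB ω.2) := by
      rw [hf, step_univ_FrB hn ω]
      refine Prod.ext ?_ rfl
      exact hrowsall (FrB ω.2) hj₀ hj₁F
    have : survivors (RPay ω) (CPay ω) = (Finset.univ, FrB ω.2) := by
      rw [hsurv, show 2 + n = (1 + n) + 1 by omega, Function.iterate_add_apply,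
        Function.iterate_one, h1, Function.iterate_fixed h2]
    have hcard : (survivors (RPay ω) (CPay ω)).1.card = 1 := hs.1
    rw [this] at hcard
    simp [Finset.card_univ] at hcard
  · -- constant on frontier → solvable
    rintro ⟨x, hx⟩
    have hxval : ω.1 j₀ 0 = x := hx j₀ hj₀
    -- the two final steps, common to both cases
    have hstep_single : f ({x+1}, FrB ω.2)
        = ({x+1}, (FrB ω.2).filter fun j => ¬ ∃ j' ∈ FrB ω.2, ω.2 (x+1) j < ω.2 (x+1) j') := by
      rw [hf]; exact step_single ω (x+1) _ ⟨j₀, hj₀⟩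
    obtain ⟨jm, hjm⟩ := Finset.card_eq_one.mp
      (argmax_filter_card ω.2 (x+1) (FrB ω.2) ⟨j₀, hj₀⟩)
    have hfix : f ({x+1}, {jm}) = ({x+1}, {jm}) := elimStep_fixed _ _ _ _
    by_cases hall : ∀ j, ω.1 j 0 = x
    · -- constant everywhere
      have h1 : f (Finset.univ, Finset.univ) = ({x+1}, FrB ω.2) := by
        rw [hf, step_full hn ω]
        refine Prod.ext ?_ rfl
        simp only
        ext i
        simp only [Finset.mem_filter, Finset.mem_univ, true_and, Finset.mem_singleton]
        rw [← fin2_ne_iff i x]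
        constructor
        · intro h
          intro hix
          exact h (by intro j; rw [hall j, hix])
        · intro h hcon
          exact h ((hcon j₀).symm.trans hxval)
      have h2 : f^[2] (Finset.univ, Finset.univ) = ({x+1}, {jm}) := by
        show f (f (Finset.univ, Finset.univ)) = _
        rw [h1, hstep_single, hjm]
      have : survivors (RPay ω) (CPay ω) = ({x+1}, {jm}) := by
        rw [hsurv, show 2 + n = n + 2 by omega, Function.iterate_add_apply, h2,
          Function.iterate_fixed hfix]
      exact gameSolvable_of ω _ _ this
    · -- not constant everywhere
      push_neg at hall
      obtain ⟨j₁, hj₁⟩ := hall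
      have h1 : f (Finset.univ, Finset.univ) = (Finset.univ, FrB ω.2) := by
        rw [hf, step_full hn ω]
        refine Prod.ext ?_ rfl
        simp only
        rw [Finset.filter_eq_self]
        intro i _ hcon
        by_cases hix : i = x
        · exact hj₁ (by rw [hcon j₁, hix])
        · exact hix ((hcon j₀).symm.trans hxval)
      have h2 : f (Finset.univ, FrB ω.2) = ({x+1}, FrB ω.2) := by
        rw [hf, step_univ_FrB hn ω]
        refine Prod.ext ?_ rfl
        simp only
        ext i
        simp only [Finset.mem_filter, Finset.mem_univ, true_and, Finset.mem_singleton]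
        rw [← fin2_ne_iff i x]
        constructor
        · intro h hix
          exact h (fun j hj => by rw [hx j hj, hix])
        · intro h hcon
          exact h ((hcon j₀ hj₀).symm.trans hxval)
      have h3 : f^[3] (Finset.univ, Finset.univ) = ({x+1}, {jm}) := by
        show f (f (f (Finset.univ, Finset.univ))) = _
        rw [h1, h2, hstep_single, hjm]
      have : survivors (RPay ω) (CPay ω) = ({x+1}, {jm}) := by
        rw [hsurv, show 2 + n = (n - 1) + 3 by omega, Function.iterate_add_apply, h3,
          Function.iterate_fixed hfix]
      exact gameSolvable_of ω _ _ this

end Stage3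

section Stage4

open Equiv

variable {n : ℕ}

lemma perm2_card_fix : ∀ x : Fin 2,
    ((Finset.univ : Finset (Equiv.Perm (Fin 2))).filter fun g => g 0 = x).card = 1 := by
  decide

lemma perm2_card : ((Finset.univ : Finset (Equiv.Perm (Fin 2)))).card = 2 := by decide

open Classical in
lemma Pr_eq_filter (E : Set (Omega 2 n)) :
    Pr E = ((Finset.univ.filter fun ω => ω ∈ E).card : ℝ) / (Fintype.card (Omega 2 n) : ℝ) := by
  have h : E.toFinite.toFinset = Finset.univ.filter fun ω => ω ∈ E := by
    ext ω
    simp only [Set.Finite.mem_toFinset, Finset.mem_filter, Finset.mem_univ, true_and]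
  rw [Pr, h]

open Classical in
lemma inner_count (hn : 1 ≤ n) (b : Fin 2 → Equiv.Perm (Fin n)) :
    (Finset.univ.filter fun a : Fin n → Equiv.Perm (Fin 2) =>
        ∃ x, ∀ j ∈ FrB b, a j 0 = x).card
      = 2 * 2 ^ (n - (FrB b).card) := by
  classical
  obtain ⟨j₀, hj₀⟩ := FrB_nonempty hn b
  have hsplit : (Finset.univ.filter fun a : Fin n → Equiv.Perm (Fin 2) =>
      ∃ x, ∀ j ∈ FrB b, a j 0 = x)
      = (Finset.univ.filter fun a : Fin n → Equiv.Perm (Fin 2) => ∀ j ∈ FrB b, a j 0 = 0)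
        ∪ (Finset.univ.filter fun a : Fin n → Equiv.Perm (Fin 2) => ∀ j ∈ FrB b, a j 0 = 1) := by
    rw [← Finset.filter_or]
    refine Finset.filter_congr fun a _ => ?_
    constructor
    · rintro ⟨x, hx⟩
      fin_cases x
      · exact Or.inl hx
      · exact Or.inr hx
    · rintro (h | h)
      · exact ⟨0, h⟩
      · exact ⟨1, h⟩
  have hdisj : Disjoint
      (Finset.univ.filter fun a : Fin n → Equiv.Perm (Fin 2) => ∀ j ∈ FrB b, a j 0 = 0)
      (Finset.univ.filter fun a : Fin n → Equiv.Perm (Fin 2) => ∀ j ∈ FrB b, a j 0 = 1) := by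
    rw [Finset.disjoint_left]
    intro a ha hb
    rw [Finset.mem_filter] at ha hb
    have h0 := ha.2 j₀ hj₀
    have h1 := hb.2 j₀ hj₀
    rw [h0] at h1
    exact absurd h1 (by decide)
  have hcount : ∀ x : Fin 2,
      (Finset.univ.filter fun a : Fin n → Equiv.Perm (Fin 2) =>
        ∀ j ∈ FrB b, a j 0 = x).card = 2 ^ (n - (FrB b).card) := by
    intro x
    have hpi : (Finset.univ.filter fun a : Fin n → Equiv.Perm (Fin 2) =>
        ∀ j ∈ FrB b, a j 0 = x)
        = Fintype.piFinset (fun j : Fin n =>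
            (Finset.univ : Finset (Equiv.Perm (Fin 2))).filter fun g => j ∈ FrB b → g 0 = x) := by
      ext a
      simp only [Finset.mem_filter, Finset.mem_univ, true_and, Fintype.mem_piFinset]
    rw [hpi, Fintype.card_piFinset]
    have : ∀ j : Fin n, ((Finset.univ : Finset (Equiv.Perm (Fin 2))).filter
        fun g => j ∈ FrB b → g 0 = x).card = if j ∈ FrB b then 1 else 2 := by
      intro j
      by_cases hj : j ∈ FrB b
      · rw [if_pos hj]
        rw [show ((Finset.univ : Finset (Equiv.Perm (Fin 2))).filter fun g => j ∈ FrB b → g 0 = x)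
            = ((Finset.univ : Finset (Equiv.Perm (Fin 2))).filter fun g => g 0 = x) from
          Finset.filter_congr fun g _ => by simp [hj]]
        exact perm2_card_fix x
      · rw [if_neg hj]
        rw [show ((Finset.univ : Finset (Equiv.Perm (Fin 2))).filter fun g => j ∈ FrB b → g 0 = x)
            = (Finset.univ : Finset (Equiv.Perm (Fin 2))) from by
          rw [Finset.filter_eq_self]; intro g _ hc; exact absurd hc hj]
        exact perm2_card
    rw [Finset.prod_congr rfl fun j _ => this j]
    rw [← Finset.prod_filter_mul_prod_filter_not Finset.univ (fun j => j ∈ FrB b)]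
    rw [Finset.prod_congr rfl (fun j hj => if_pos (Finset.mem_filter.mp hj).2),
      Finset.prod_congr rfl (fun j (hj : j ∈ Finset.univ.filter _) =>
        if_neg (Finset.mem_filter.mp hj).2)]
    rw [Finset.prod_const, Finset.prod_const, one_pow, one_mul]
    congr 1
    rw [Finset.filter_not, Finset.filter_mem_eq_inter, Finset.univ_inter,
      Finset.card_sdiff_of_subset (Finset.subset_univ _), Finset.card_univ, Fintype.card_fin]
  rw [hsplit, Finset.card_union_of_disjoint hdisj, hcount 0, hcount 1]
  ring

lemma mem_recSet_iff (π : Equiv.Perm (Fin n)) (x : Fin n) :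
    x ∈ recSet π ↔ ∀ y, ¬(x < y ∧ π x < π y) := by
  simp only [recSet, Finset.mem_filter, Finset.mem_univ, true_and]
  constructor
  · rintro h y ⟨hxy, hlt⟩
    exact absurd hlt (not_lt.mpr (le_of_lt (h y hxy)))
  · intro h w hw
    have hne : π w ≠ π x := fun hc => (ne_of_lt hw).symm (π.injective hc)
    rcases lt_or_gt_of_ne hne with h1 | h1
    · exact h1
    · exact absurd ⟨hw, h1⟩ (h w)

lemma card_FrB (b : Fin 2 → Equiv.Perm (Fin n)) :
    (FrB b).card = recCount (b 1 * (b 0)⁻¹) := by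
  classical
  set π := b 1 * (b 0)⁻¹ with hπ
  have hπap : ∀ j, π (b 0 j) = b 1 j := by
    intro j
    rw [hπ, Equiv.Perm.mul_apply, Equiv.Perm.inv_def, Equiv.symm_apply_apply]
  have hmem : ∀ j, j ∈ FrB b ↔ b 0 j ∈ recSet π := by
    intro j
    rw [mem_FrB_iff, mem_recSet_iff]
    constructor
    · rintro h y ⟨h1, h2⟩
      refine h ((b 0)⁻¹ y) ⟨?_, ?_⟩
      · rwa [Equiv.Perm.inv_def, Equiv.apply_symm_apply]
      · rw [hπap] at h2
        rw [show π y = b 1 ((b 0)⁻¹ y) from Equiv.Perm.mul_apply _ _ _] at h2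
        exact h2
    · rintro h j' ⟨h1, h2⟩
      refine h (b 0 j') ⟨h1, ?_⟩
      rw [hπap, hπap]
      exact h2
  rw [recCount]
  refine Finset.card_bij (fun j _ => b 0 j) ?_ ?_ ?_
  · intro j hj
    exact (hmem j).mp hj
  · intro j1 h1 j2 h2 he
    exact (b 0).injective he
  · intro y hy
    refine ⟨(b 0)⁻¹ y, ?_, Equiv.apply_symm_apply _ _⟩
    rw [hmem, Equiv.Perm.inv_def, Equiv.apply_symm_apply]
    exact hy

end Stage4

section Stage5

open Equiv

variable {n : ℕ}

lemma card_omega (n : ℕ) :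
    Fintype.card (Omega 2 n) = 2 ^ n * (n.factorial * n.factorial) := by
  rw [show Fintype.card (Omega 2 n)
      = Fintype.card (Fin n → Equiv.Perm (Fin 2)) * Fintype.card (Fin 2 → Equiv.Perm (Fin n))
    from Fintype.card_prod _ _]
  rw [Fintype.card_fun, Fintype.card_fun, Fintype.card_perm, Fintype.card_perm,
    Fintype.card_fin, Fintype.card_fin]
  norm_num [Nat.factorial]
  ring

open Classical in
lemma sum_over_b (hn : 1 ≤ n) :
    (∑ b : Fin 2 → Equiv.Perm (Fin n), 2 * 2 ^ (n - (FrB b).card))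
      = 2 * (n.factorial * Arec n) := by
  calc (∑ b : Fin 2 → Equiv.Perm (Fin n), 2 * 2 ^ (n - (FrB b).card))
      = ∑ b : Fin 2 → Equiv.Perm (Fin n), 2 * 2 ^ (n - recCount (b 1 * (b 0)⁻¹)) := by
        refine Finset.sum_congr rfl fun b _ => by rw [card_FrB]
    _ = ∑ pq : Equiv.Perm (Fin n) × Equiv.Perm (Fin n),
          2 * 2 ^ (n - recCount (pq.2 * pq.1⁻¹)) := by
        refine Fintype.sum_equiv (piFinTwoEquiv fun _ => Equiv.Perm (Fin n)) _ _ fun b => rfl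
    _ = ∑ p : Equiv.Perm (Fin n), ∑ q : Equiv.Perm (Fin n),
          2 * 2 ^ (n - recCount (q * p⁻¹)) := by
        rw [Fintype.sum_prod_type]
    _ = ∑ _p : Equiv.Perm (Fin n), ∑ π : Equiv.Perm (Fin n), 2 * 2 ^ (n - recCount π) := by
        refine Finset.sum_congr rfl fun p _ => ?_
        exact Fintype.sum_equiv (Equiv.mulRight p⁻¹)
          (fun q => 2 * 2 ^ (n - recCount (q * p⁻¹)))
          (fun π => 2 * 2 ^ (n - recCount π)) fun q => rfl
    _ = 2 * (n.factorial * Arec n) := by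
        rw [Finset.sum_const, Finset.card_univ, Fintype.card_perm, Fintype.card_fin,
          smul_eq_mul, ← Finset.mul_sum, Arec]
        ring

open Classical in
lemma count_solvable (hn : 1 ≤ n) :
    (Finset.univ.filter fun ω : Omega 2 n => GameSolvable ω).card
      = 2 * (n.factorial * Arec n) := by
  have h1 : (Finset.univ.filter fun ω : Omega 2 n => GameSolvable ω)
      = Finset.univ.filter fun ω : Omega 2 n => ∃ x, ∀ j ∈ FrB ω.2, ω.1 j 0 = x :=
    Finset.filter_congr fun ω _ => solvable_iff hn ω
  rw [h1, Finset.card_filter]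
  rw [show (∑ ω : Omega 2 n, if (∃ x, ∀ j ∈ FrB ω.2, ω.1 j 0 = x) then 1 else 0)
      = ∑ b : Fin 2 → Equiv.Perm (Fin n), ∑ a : Fin n → Equiv.Perm (Fin 2),
          if (∃ x, ∀ j ∈ FrB b, a j 0 = x) then 1 else 0 from Fintype.sum_prod_type_right _]
  rw [show (∑ b : Fin 2 → Equiv.Perm (Fin n), ∑ a : Fin n → Equiv.Perm (Fin 2),
        if (∃ x, ∀ j ∈ FrB b, a j 0 = x) then 1 else 0)
      = ∑ b : Fin 2 → Equiv.Perm (Fin n), 2 * 2 ^ (n - (FrB b).card) from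
    Finset.sum_congr rfl fun b _ => by
      rw [← Finset.card_filter]
      exact inner_count hn b]
  exact sum_over_b hn

lemma Arec_pos (n : ℕ) : 0 < Arec n := by
  refine Finset.sum_pos (fun π _ => pow_pos (by norm_num) _) ⟨1, Finset.mem_univ _⟩

open Classical in
lemma probSolvable_eq (hn : 1 ≤ n) :
    probSolvable 2 n
      = (2 * ((n.factorial : ℝ) * (Arec n : ℝ))) / ((2:ℝ) ^ n * ((n.factorial : ℝ) * (n.factorial : ℝ))) := by
  rw [probSolvable, Pr_eq_filter]
  rw [show (Finset.univ.filter fun ω : Omega 2 n => ω ∈ {ω : Omega 2 n | GameSolvable ω})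
      = Finset.univ.filter fun ω : Omega 2 n => GameSolvable ω from
    Finset.filter_congr fun ω _ => Iff.rfl]
  rw [count_solvable hn, card_omega]
  push_cast
  ring_nf

end Stage5

/-- The probability of strict-dominance solvability of `G(2,n)` is strictly
decreasing in `n`: for every `n ≥ 1`, `π(2,n+1) < π(2,n)`. -/
theorem stmt3 (n : ℕ) (hn : 1 ≤ n) :
    probSolvable 2 (n + 1) < probSolvable 2 n := by
  have h1 := probSolvable_eq (n := n) hn
  have h2 := probSolvable_eq (n := n + 1) (by omega)
  rw [h1, h2]
  have hAcast : ((Arec (n+1) : ℝ)) = (2 * n + 1 : ℝ) * (Arec n : ℝ) := by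
    rw [Arec_succ]
    push_cast
    ring
  rw [hAcast]
  have hf1 : (0:ℝ) < (n.factorial : ℝ) := by exact_mod_cast n.factorial_pos
  have hf2 : (0:ℝ) < ((n+1).factorial : ℝ) := by exact_mod_cast (n+1).factorial_pos
  have hp : (0:ℝ) < (2:ℝ) ^ n := by positivity
  have hA : (1:ℝ) ≤ (Arec n : ℝ) := by exact_mod_cast Arec_pos n
  have hApos : (0:ℝ) < (Arec n : ℝ) := by linarith
  rw [div_lt_div_iff₀ (by positivity) (by positivity)]
  have hfs : ((n+1).factorial : ℝ) = ((n:ℝ) + 1) * (n.factorial : ℝ) := by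
    rw [Nat.factorial_succ]
    push_cast
    ring
  rw [hfs, pow_succ]
  have hc : (0:ℝ) < 2 * ((n:ℝ)+1) * (Arec n : ℝ) * (2:ℝ)^n
      * ((n.factorial:ℝ) * (n.factorial:ℝ) * (n.factorial:ℝ)) := by positivity
  have key : (2*(n:ℝ)+1) < 2*(n:ℝ)+2 := by norm_num
  linarith [mul_lt_mul_of_pos_left key hc]
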